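/- Let n ≥ 2 and let i be any index with 2 ≤ i ≤ n. Substituting t_1 := t_i in the polynomial P_n ∈ F_2[t_1,…,t_n] yields the polynomial Σ_{(e_2,…,e_n)} t_2^{2^{e_2}} ⋯ t_n^{2^{e_n}}, where the sum is over all (n−1)-tuples (e_2,…,e_n) of nonnegative integers with 2^{e_2}+⋯+2^{e_n} = 2^{n−1}. In particular the result of this substitution is the same for every choice of i with 2 ≤ i ≤ n. -/

import Mathlib

lemma ds_rec (n : ℕ) (h : 0 < n) :
    (Nat.digits 2 n).sum = n % 2 + (Nat.digits 2 (n / 2)).sum := by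
  rw [Nat.digits_def' one_lt_two h]; simp

lemma ds_two_pow (e : ℕ) : (Nat.digits 2 (2 ^ e)).sum = 1 := by
  induction e with
  | zero => simp
  | succ e ih =>
    rw [ds_rec (2 ^ (e + 1)) (by positivity)]
    have hpos : 0 < 2 ^ e := by positivity
    have h2 : 2 ^ (e + 1) = 2 * 2 ^ e := by ring
    have hm : 2 ^ (e + 1) % 2 = 0 := by omega
    have hd : 2 ^ (e + 1) / 2 = 2 ^ e := by omega
    rw [hm, hd, ih]

lemma ds_succ (x : ℕ) : (Nat.digits 2 (x + 1)).sum ≤ (Nat.digits 2 x).sum + 1 := by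
  induction x using Nat.strong_induction_on with
  | _ x ih =>
    rcases Nat.eq_zero_or_pos x with rfl | hx
    · simp
    rcases Nat.even_or_odd x with ⟨k, hk⟩ | ⟨k, hk⟩
    · subst hk
      have h1 : (k + k + 1) % 2 = 1 := by omega
      have h2 : (k + k + 1) / 2 = k := by omega
      have h3 : (k + k) % 2 = 0 := by omega
      have h4 : (k + k) / 2 = k := by omega
      rw [ds_rec (k + k + 1) (by omega), h1, h2, ds_rec (k + k) (by omega), h3, h4]
      omega
    · subst hk
      have h1 : (2 * k + 1 + 1) % 2 = 0 := by omega
      have h2 : (2 * k + 1 + 1) / 2 = k + 1 := by omega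
      have h3 : (2 * k + 1) % 2 = 1 := by omega
      have h4 : (2 * k + 1) / 2 = k := by omega
      rw [ds_rec (2 * k + 1 + 1) (by omega), h1, h2,
        ds_rec (2 * k + 1) (by omega), h3, h4]
      have := ih k (by omega)
      omega

lemma ds_add_two_pow (e : ℕ) : ∀ x : ℕ,
    (Nat.digits 2 (2 ^ e + x)).sum ≤ 1 + (Nat.digits 2 x).sum := by
  induction e with
  | zero => intro x; simpa [Nat.add_comm] using ds_succ x
  | succ e ih =>
    intro x
    rcases Nat.eq_zero_or_pos x with rfl | hx
    · simpa using (ds_two_pow (e + 1)).le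
    rw [ds_rec (2 ^ (e + 1) + x) (by positivity), ds_rec x hx]
    have h2 : 2 ^ (e + 1) = 2 * 2 ^ e := by ring
    have hm : (2 ^ (e + 1) + x) % 2 = x % 2 := by omega
    have hd : (2 ^ (e + 1) + x) / 2 = 2 ^ e + x / 2 := by omega
    rw [hm, hd]
    have := ih (x / 2)
    omega

lemma ds_sum_le {ι : Type*} [DecidableEq ι] (s : Finset ι) (g : ι → ℕ) :
    (Nat.digits 2 (∑ j ∈ s, 2 ^ g j)).sum ≤ s.card := by
  induction s using Finset.induction_on with
  | empty => simp
  | insert _ _ h ih =>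
    rw [Finset.sum_insert h, Finset.card_insert_of_notMem h]
    calc (Nat.digits 2 (2 ^ g _ + ∑ j ∈ _, 2 ^ g j)).sum
        ≤ 1 + (Nat.digits 2 (∑ j ∈ _, 2 ^ g j)).sum := ds_add_two_pow _ _
      _ ≤ _ := by omega

lemma ds_pow_sub_one (m : ℕ) : (Nat.digits 2 (2 ^ m - 1)).sum = m := by
  induction m with
  | zero => simp
  | succ m ih =>
    have hpos : 0 < 2 ^ m := by positivity
    have hp : 2 ^ (m + 1) = 2 * 2 ^ m := by ring
    rw [ds_rec _ (by omega)]
    have h1 : (2 ^ (m + 1) - 1) % 2 = 1 := by omega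
    have h2 : (2 ^ (m + 1) - 1) / 2 = 2 ^ m - 1 := by omega
    rw [h1, h2, ih]; omega

lemma one_le_of_sum_pow {ι : Type*} [Fintype ι] [DecidableEq ι] (g : ι → ℕ)
    (hcard : 1 ≤ Fintype.card ι)
    (h : ∑ j, 2 ^ g j = 2 ^ Fintype.card ι) (j : ι) : 1 ≤ g j := by
  by_contra hj
  have hj0 : g j = 0 := by omega
  have hsum : 2 ^ g j + ∑ k ∈ Finset.univ.erase j, 2 ^ g k = 2 ^ Fintype.card ι :=
    (Finset.add_sum_erase Finset.univ (fun k => 2 ^ g k) (Finset.mem_univ j)).trans h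
  have hrest : ∑ k ∈ Finset.univ.erase j, 2 ^ g k = 2 ^ Fintype.card ι - 1 := by
    rw [hj0] at hsum; omega
  have h1 := ds_sum_le (Finset.univ.erase j) g
  rw [hrest, ds_pow_sub_one] at h1
  rw [Finset.card_erase_of_mem (Finset.mem_univ j), Finset.card_univ] at h1
  omega


open MvPolynomial

/-- `P n` is the sum, over all `n`-tuples `(e 1, …, e n)` of nonnegative integers with
`2^(e 1) + ⋯ + 2^(e n) = 2^(n-1)`, of the monomials `t 1^(2^(e 1)) ⋯ t n^(2^(e n))`
in `F₂[t 1, …, t n]`. -/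
noncomputable def P (n : ℕ) : MvPolynomial (Fin n) (ZMod 2) :=
  ∑ᶠ e : Fin n → ℕ,
    if (∑ i, 2 ^ e i) = 2 ^ (n - 1) then ∏ i, X i ^ 2 ^ e i else 0

set_option maxHeartbeats 1000000 in
/-- Substituting `t 1 := t i` (for any `i ≠ 1`) in `P n` yields
`∑_{(e 2,…,e n)} t 2^(2^(e 2)) ⋯ t n^(2^(e n))`, the sum being over all `(n-1)`-tuples of
nonnegative integers with `2^(e 2) + ⋯ + 2^(e n) = 2^(n-1)`.  In particular the result of the
substitution is independent of the choice of `i`. -/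
theorem stmt_2 (n : ℕ) (hn : 2 ≤ n) (i : Fin n) (hi : i ≠ ⟨0, by omega⟩) :
    aeval
        (fun j : Fin n =>
          if j = ⟨0, by omega⟩ then (X i : MvPolynomial (Fin n) (ZMod 2)) else X j)
        (P n) =
      ∑ᶠ e : {j : Fin n // j ≠ ⟨0, by omega⟩} → ℕ,
        if (∑ j, 2 ^ e j) = 2 ^ (n - 1) then
          ∏ j : {j : Fin n // j ≠ ⟨0, by omega⟩},
            (X (j : Fin n) : MvPolynomial (Fin n) (ZMod 2)) ^ 2 ^ e j
        else 0 := by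
  classical
  set z : Fin n := ⟨0, by omega⟩ with hzdef
  set φ : Fin n → MvPolynomial (Fin n) (ZMod 2) :=
    fun j => if j = z then X i else X j with hφ
  have hiz : i ≠ z := hi
  have h1n : 1 ≤ n - 1 := by omega
  -- bound lemmas
  have hboundS : ∀ e : Fin n → ℕ, (∑ j, 2 ^ e j) = 2 ^ (n - 1) → ∀ j, e j < n := by
    intro e he j
    have h1 : 2 ^ e j ≤ ∑ k, 2 ^ e k :=
      Finset.single_le_sum (f := fun k => 2 ^ e k) (fun k _ => Nat.zero_le _) (Finset.mem_univ j)
    rw [he] at h1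
    have := (Nat.pow_le_pow_iff_right (by norm_num : 1 < 2)).mp h1
    omega
  have hboundT : ∀ f : {j : Fin n // j ≠ z} → ℕ,
      (∑ j, 2 ^ f j) = 2 ^ (n - 1) → ∀ j, f j < n := by
    intro f hf j
    have h1 : 2 ^ f j ≤ ∑ k, 2 ^ f k :=
      Finset.single_le_sum (f := fun k => 2 ^ f k) (fun k _ => Nat.zero_le _) (Finset.mem_univ j)
    rw [hf] at h1
    have := (Nat.pow_le_pow_iff_right (by norm_num : 1 < 2)).mp h1
    omega
  have hcard : Fintype.card {j : Fin n // j ≠ z} = n - 1 := by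
    simp [Fintype.card_subtype_compl, Fintype.card_subtype_eq]
  set S : Finset (Fin n → ℕ) := Fintype.piFinset (fun _ : Fin n => Finset.range n) with hS
  set T : Finset ({j : Fin n // j ≠ z} → ℕ) :=
    Fintype.piFinset (fun _ => Finset.range n) with hT
  have hP : P n = ∑ e ∈ S,
      (if (∑ j, 2 ^ e j) = 2 ^ (n - 1) then
        ∏ j, (X j : MvPolynomial (Fin n) (ZMod 2)) ^ 2 ^ e j else 0) := by
    refine finsum_eq_sum_of_support_subset _ ?_
    intro e he
    simp only [Function.mem_support] at he
    by_cases hc : (∑ j, 2 ^ e j) = 2 ^ (n - 1)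
    · simp only [Finset.coe_sort_coe, Finset.mem_coe, hS, Fintype.mem_piFinset]
      intro j
      exact Finset.mem_range.mpr (hboundS e hc j)
    · exact absurd (if_neg hc) he
  have hRHS : (∑ᶠ f : {j : Fin n // j ≠ z} → ℕ,
      if (∑ j, 2 ^ f j) = 2 ^ (n - 1) then
        ∏ j : {j : Fin n // j ≠ z},
          (X (j : Fin n) : MvPolynomial (Fin n) (ZMod 2)) ^ 2 ^ f j else 0) =
      ∑ f ∈ T, (if (∑ j, 2 ^ f j) = 2 ^ (n - 1) then
        ∏ j : {j : Fin n // j ≠ z},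
          (X (j : Fin n) : MvPolynomial (Fin n) (ZMod 2)) ^ 2 ^ f j else 0) := by
    refine finsum_eq_sum_of_support_subset _ ?_
    intro f hf
    simp only [Function.mem_support] at hf
    by_cases hc : (∑ j, 2 ^ f j) = 2 ^ (n - 1)
    · simp only [Finset.coe_sort_coe, Finset.mem_coe, hT, Fintype.mem_piFinset]
      intro j
      exact Finset.mem_range.mpr (hboundT f hc j)
    · exact absurd (if_neg hc) hf
  rw [hP, map_sum, hRHS]
  have hstep : ∀ e : Fin n → ℕ,
      (aeval φ) (if (∑ j, 2 ^ e j) = 2 ^ (n - 1) then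
          ∏ j, (X j : MvPolynomial (Fin n) (ZMod 2)) ^ 2 ^ e j else 0) =
      (if (∑ j, 2 ^ e j) = 2 ^ (n - 1) then ∏ j, φ j ^ 2 ^ e j else 0) := by
    intro e
    split
    · rw [map_prod]
      exact Finset.prod_congr rfl fun j _ => by rw [map_pow, aeval_X]
    · exact map_zero _
  calc ∑ e ∈ S, (aeval φ) (if (∑ j, 2 ^ e j) = 2 ^ (n - 1) then
          ∏ j, (X j : MvPolynomial (Fin n) (ZMod 2)) ^ 2 ^ e j else 0)
      = ∑ e ∈ S, (if (∑ j, 2 ^ e j) = 2 ^ (n - 1) then ∏ j, φ j ^ 2 ^ e j else 0) :=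
        Finset.sum_congr rfl fun e _ => hstep e
    _ = ∑ e ∈ S.filter (fun e => e z = e i),
          (if (∑ j, 2 ^ e j) = 2 ^ (n - 1) then ∏ j, φ j ^ 2 ^ e j else 0) +
        ∑ e ∈ S.filter (fun e => ¬ e z = e i),
          (if (∑ j, 2 ^ e j) = 2 ^ (n - 1) then ∏ j, φ j ^ 2 ^ e j else 0) :=
        (Finset.sum_filter_add_sum_filter_not S _ _).symm
    _ = ∑ e ∈ S.filter (fun e => e z = e i),
          (if (∑ j, 2 ^ e j) = 2 ^ (n - 1) then ∏ j, φ j ^ 2 ^ e j else 0) := by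
        rw [add_eq_left]
        have hφswap : ∀ j, φ (Equiv.swap z i j) = φ j := by
          intro j
          rcases eq_or_ne j z with rfl | hjz
          · rw [Equiv.swap_apply_left]
            simp [hφ, hiz]
          · rcases eq_or_ne j i with rfl | hji
            · rw [Equiv.swap_apply_right]
              simp [hφ, hiz]
            · rw [Equiv.swap_apply_of_ne_of_ne hjz hji]
        have hFswap : ∀ e : Fin n → ℕ,
            (if (∑ j, 2 ^ (e ∘ (Equiv.swap z i)) j) = 2 ^ (n - 1) then
              ∏ j, φ j ^ 2 ^ (e ∘ (Equiv.swap z i)) j else 0)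
            = (if (∑ j, 2 ^ e j) = 2 ^ (n - 1) then ∏ j, φ j ^ 2 ^ e j else 0) := by
          intro e
          have hsum : (∑ j, 2 ^ (e ((Equiv.swap z i) j))) = ∑ j, 2 ^ e j :=
            Equiv.sum_comp (Equiv.swap z i) (fun j => 2 ^ e j)
          have hprod : (∏ j, φ j ^ 2 ^ (e ((Equiv.swap z i) j))) = ∏ j, φ j ^ 2 ^ e j := by
            calc (∏ j, φ j ^ 2 ^ (e ((Equiv.swap z i) j)))
                = ∏ j, φ ((Equiv.swap z i) j) ^ 2 ^ (e ((Equiv.swap z i) j)) :=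
                  Finset.prod_congr rfl fun j _ => by rw [hφswap]
              _ = ∏ j, φ j ^ 2 ^ e j :=
                  Equiv.prod_comp (Equiv.swap z i) (fun j => φ j ^ 2 ^ e j)
          simp only [Function.comp_apply]
          rw [hsum, hprod]
        refine Finset.sum_involution (fun e _ => e ∘ (Equiv.swap z i)) (fun e he => ?_)
          (fun e he _ => ?_) (fun e he => ?_) (fun e he => ?_)
        · rw [hFswap e]
          exact CharTwo.add_self_eq_zero _
        · simp only [Finset.mem_filter] at he
          intro hcontra
          have h2 := congrFun hcontra z
          simp only [Function.comp_apply, Equiv.swap_apply_left] at h2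
          exact he.2 h2.symm
        · simp only [Finset.mem_filter, hS, Fintype.mem_piFinset] at he ⊢
          refine ⟨fun j => he.1 _, ?_⟩
          simp only [Function.comp_apply, Equiv.swap_apply_left, Equiv.swap_apply_right]
          exact fun h => he.2 h.symm
        · funext j
          simp [Equiv.swap_apply_self]
    _ = ∑ f ∈ T, (if (∑ j, 2 ^ f j) = 2 ^ (n - 1) then
          ∏ j : {j : Fin n // j ≠ z},
            (X (j : Fin n) : MvPolynomial (Fin n) (ZMod 2)) ^ 2 ^ f j else 0) := by
        set R : Finset (Fin n) := (Finset.univ.erase z).erase i with hR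
        have hiR : i ∈ Finset.univ.erase z := Finset.mem_erase.mpr ⟨hiz, Finset.mem_univ i⟩
        set vf : ({j : Fin n // j ≠ z} → ℕ) → Fin n → ℕ :=
          fun f j => if hj : j = z then 0 else f ⟨j, hj⟩ with hvf
        have hvfi : ∀ f, vf f i = f ⟨i, hiz⟩ := fun f => dif_neg hiz
        set toF : (Fin n → ℕ) → ({j : Fin n // j ≠ z} → ℕ) :=
          fun e j => if (j : Fin n) = i then e i + 1 else e (j : Fin n) with htoF
        set froF : ({j : Fin n // j ≠ z} → ℕ) → (Fin n → ℕ) :=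
          fun f j => if j = z then f ⟨i, hiz⟩ - 1
            else if j = i then f ⟨i, hiz⟩ - 1 else vf f j with hfroF
        have hmem : ∀ x : Fin n, x ∈ Finset.univ.erase z ↔ x ≠ z := fun x => by simp
        have hdecompS : ∀ e : Fin n → ℕ,
            (∑ j, 2 ^ e j) = 2 ^ e z + (2 ^ e i + ∑ j ∈ R, 2 ^ e j) := by
          intro e
          rw [← Finset.add_sum_erase _ (fun j => 2 ^ e j) (Finset.mem_univ z),
              ← Finset.add_sum_erase _ (fun j => 2 ^ e j) hiR]
        have hprodS : ∀ e : Fin n → ℕ, (∏ j, φ j ^ 2 ^ e j) =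
            X i ^ 2 ^ e z * (X i ^ 2 ^ e i *
              ∏ j ∈ R, (X j : MvPolynomial (Fin n) (ZMod 2)) ^ 2 ^ e j) := by
          intro e
          rw [← Finset.mul_prod_erase _ (fun j => φ j ^ 2 ^ e j) (Finset.mem_univ z),
              ← Finset.mul_prod_erase _ (fun j => φ j ^ 2 ^ e j) hiR]
          have hφz : φ z = X i := by simp [hφ]
          have hφi : φ i = X i := by simp [hφ, hiz]
          rw [hφz, hφi]
          congr 1
          congr 1
          refine Finset.prod_congr rfl fun j hj => ?_
          have hjz : j ≠ z := (Finset.mem_erase.mp (Finset.mem_erase.mp hj).2).1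
          rw [hφ]
          simp only [if_neg hjz]
        have hsubsum : ∀ f : {j : Fin n // j ≠ z} → ℕ,
            (∑ j, 2 ^ f j) = 2 ^ f ⟨i, hiz⟩ + ∑ j ∈ R, 2 ^ vf f j := by
          intro f
          have h1 : (∑ j ∈ Finset.univ.erase z, 2 ^ vf f j)
              = ∑ j : {j : Fin n // j ≠ z}, 2 ^ f j := by
            rw [Finset.sum_subtype (Finset.univ.erase z) hmem (fun x => 2 ^ vf f x)]
            refine Finset.sum_congr rfl fun j _ => ?_
            simp only [hvf]
            rw [dif_neg j.prop]
          rw [← h1, ← Finset.add_sum_erase _ (fun j => 2 ^ vf f j) hiR, hvfi]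
        have hsubprod : ∀ f : {j : Fin n // j ≠ z} → ℕ,
            (∏ j : {j : Fin n // j ≠ z},
              (X (j : Fin n) : MvPolynomial (Fin n) (ZMod 2)) ^ 2 ^ f j)
            = X i ^ 2 ^ f ⟨i, hiz⟩ *
              ∏ j ∈ R, (X j : MvPolynomial (Fin n) (ZMod 2)) ^ 2 ^ vf f j := by
          intro f
          have h1 : (∏ j ∈ Finset.univ.erase z,
                (X j : MvPolynomial (Fin n) (ZMod 2)) ^ 2 ^ vf f j)
              = ∏ j : {j : Fin n // j ≠ z},
                (X (j : Fin n) : MvPolynomial (Fin n) (ZMod 2)) ^ 2 ^ f j := by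
            rw [Finset.prod_subtype (Finset.univ.erase z) hmem
              (fun x => (X x : MvPolynomial (Fin n) (ZMod 2)) ^ 2 ^ vf f x)]
            refine Finset.prod_congr rfl fun j _ => ?_
            simp only [hvf]
            rw [dif_neg j.prop]
          rw [← h1, ← Finset.mul_prod_erase _
            (fun j => (X j : MvPolynomial (Fin n) (ZMod 2)) ^ 2 ^ vf f j) hiR, hvfi]
        -- vf of toF e on R agrees with e
        have hvftoF : ∀ e : Fin n → ℕ, ∀ j ∈ R, vf (toF e) j = e j := by
          intro e j hj
          have hji : j ≠ i := (Finset.mem_erase.mp hj).1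
          have hjz : j ≠ z := (Finset.mem_erase.mp (Finset.mem_erase.mp hj).2).1
          rw [hvf]
          simp only [dif_neg hjz]
          rw [htoF]
          simp only [if_neg hji]
        have hvffroF : ∀ f : {j : Fin n // j ≠ z} → ℕ, ∀ j ∈ R, vf f j = froF f j := by
          intro f j hj
          have hji : j ≠ i := (Finset.mem_erase.mp hj).1
          have hjz : j ≠ z := (Finset.mem_erase.mp (Finset.mem_erase.mp hj).2).1
          rw [hfroF]
          simp only [if_neg hjz, if_neg hji]
        have htoFi : ∀ e : Fin n → ℕ, toF e ⟨i, hiz⟩ = e i + 1 := by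
          intro e; simp [htoF]
        have hfroFz : ∀ f, froF f z = f ⟨i, hiz⟩ - 1 := by
          intro f; rw [hfroF]; simp
        have hfroFi : ∀ f, froF f i = f ⟨i, hiz⟩ - 1 := by
          intro f; rw [hfroF]; simp [hiz]
        rw [← Finset.sum_filter (fun e : Fin n → ℕ => (∑ j, 2 ^ e j) = 2 ^ (n - 1))
              (fun e => ∏ j, φ j ^ 2 ^ e j),
            ← Finset.sum_filter (fun f : {j : Fin n // j ≠ z} → ℕ =>
                (∑ j, 2 ^ f j) = 2 ^ (n - 1))
              (fun f => ∏ j : {j : Fin n // j ≠ z},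
                (X (j : Fin n) : MvPolynomial (Fin n) (ZMod 2)) ^ 2 ^ f j)]
        refine Finset.sum_nbij' toF froF ?_ ?_ ?_ ?_ ?_
        · -- forward membership
          intro e he
          simp only [Finset.mem_filter, hS, Fintype.mem_piFinset, Finset.mem_range] at he
          obtain ⟨⟨heS, hezi⟩, hcond⟩ := he
          have h2 : 2 ^ (e i + 1) = 2 ^ e i + 2 ^ e i := by ring
          have hcond' : (∑ j, 2 ^ toF e j) = 2 ^ (n - 1) := by
            rw [hsubsum (toF e), htoFi]
            have hsumR : (∑ j ∈ R, 2 ^ vf (toF e) j) = ∑ j ∈ R, 2 ^ e j :=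
              Finset.sum_congr rfl fun j hj => by rw [hvftoF e j hj]
            rw [hsumR]
            rw [hdecompS e, hezi] at hcond
            omega
          simp only [Finset.mem_filter, hT, Fintype.mem_piFinset, Finset.mem_range]
          exact ⟨fun j => hboundT _ hcond' j, hcond'⟩
        · -- backward membership
          intro f hf
          simp only [Finset.mem_filter, hT, Fintype.mem_piFinset, Finset.mem_range] at hf
          obtain ⟨hfT, hcond'⟩ := hf
          have hone : 1 ≤ f ⟨i, hiz⟩ := by
            refine one_le_of_sum_pow f ?_ ?_ _
            · rw [hcard]; omega
            · rw [hcard]; exact hcond'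
          have h2 : 2 ^ (f ⟨i, hiz⟩ - 1) + 2 ^ (f ⟨i, hiz⟩ - 1) = 2 ^ f ⟨i, hiz⟩ := by
            obtain ⟨k, hk⟩ : ∃ k, f ⟨i, hiz⟩ = k + 1 :=
              ⟨f ⟨i, hiz⟩ - 1, by omega⟩
            rw [hk]
            simp only [Nat.add_sub_cancel]
            ring
          have hcond : (∑ j, 2 ^ froF f j) = 2 ^ (n - 1) := by
            rw [hdecompS (froF f), hfroFz, hfroFi]
            have hsumR : (∑ j ∈ R, 2 ^ froF f j) = ∑ j ∈ R, 2 ^ vf f j :=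
              Finset.sum_congr rfl fun j hj => by rw [← hvffroF f j hj]
            rw [hsumR]
            rw [hsubsum f] at hcond'
            omega
          simp only [Finset.mem_filter, hS, Fintype.mem_piFinset, Finset.mem_range]
          refine ⟨⟨fun j => hboundS _ hcond j, ?_⟩, hcond⟩
          rw [hfroFz, hfroFi]
        · -- left inverse
          intro e he
          simp only [Finset.mem_filter] at he
          have hezi : e z = e i := he.1.2
          funext j
          rcases eq_or_ne j z with rfl | hjz
          · rw [hfroFz, htoFi, hezi]; omega
          · rcases eq_or_ne j i with rfl | hji
            · rw [hfroFi, htoFi]; omega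
            · rw [hfroF]
              simp only [if_neg hjz, if_neg hji]
              rw [hvf]
              simp only [dif_neg hjz]
              rw [htoF]
              simp only [if_neg hji]
        · -- right inverse
          intro f hf
          simp only [Finset.mem_filter, hT, Fintype.mem_piFinset, Finset.mem_range] at hf
          have hone : 1 ≤ f ⟨i, hiz⟩ := by
            refine one_le_of_sum_pow f ?_ ?_ _
            · rw [hcard]; omega
            · rw [hcard]; exact hf.2
          funext j
          rcases eq_or_ne (j : Fin n) i with hji | hji
          · have hj : j = ⟨i, hiz⟩ := Subtype.ext hji
            rw [htoF]
            simp only [hji, if_pos]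
            rw [hj, hfroFi]
            omega
          · rw [htoF]
            simp only [if_neg hji]
            rw [hfroF]
            simp only [if_neg j.prop, if_neg hji]
            rw [hvf]
            simp only [dif_neg j.prop]
        · -- values agree
          intro e he
          simp only [Finset.mem_filter] at he
          have hezi : e z = e i := he.1.2
          rw [hprodS e, hsubprod (toF e), htoFi]
          have hprodR : (∏ j ∈ R, (X j : MvPolynomial (Fin n) (ZMod 2)) ^ 2 ^ vf (toF e) j)
              = ∏ j ∈ R, (X j : MvPolynomial (Fin n) (ZMod 2)) ^ 2 ^ e j :=
            Finset.prod_congr rfl fun j hj => by rw [hvftoF e j hj]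
          rw [hprodR, hezi, ← mul_assoc, ← pow_add]
          congr 2
          ring
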